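/- arXiv:2109.06920 — 2 statements merged into one kernel-verified Lean document; each statement's English description precedes it below -/
import Mathlib

section
/- Let k be odd and let Q^k(t) = Im((t+i)^k) viewed as a real polynomial of degree k-1. Then Q^k is an even function of t (a polynomial in t^2), and it has exactly (k-1)/2 positive real roots and (k-1)/2 negative real roots. -/
open Polynomial

/-- The real polynomial `Q^k(t) = ∑_{h=0}^{⌊k/2⌋} (-1)^h C(k, 2h+1) t^{k-1-2h}`. -/
noncomputable def QR (k : ℕ) : Polynomial ℝ :=
  ∑ h ∈ Finset.range (k / 2 + 1),
    Polynomial.C ((-1 : ℝ) ^ h * (k.choose (2 * h + 1) : ℝ)) * Polynomial.X ^ (k - 1 - 2 * h)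

lemma QR_eval (k : ℕ) (hk : Odd k) (t : ℝ) :
    (QR k).eval t = (((t : ℂ) + Complex.I) ^ k).im := by
  obtain ⟨n, hn⟩ := hk
  rw [add_pow, Complex.im_sum]
  have him : ∀ j, j % 2 = 1 → ((t:ℂ) ^ j * Complex.I ^ (k - j) * (k.choose j : ℂ)).im = 0 := by
    intro j hj
    have : k - j = 2 * ((k - j)/2) := by omega
    rw [this, pow_mul, Complex.I_sq]
    rw [show ((t:ℂ))^j * (-1:ℂ)^((k-j)/2) * ((k.choose j : ℕ) : ℂ)
      = (((t^j * (-1:ℝ)^((k-j)/2) * (k.choose j : ℕ)) : ℝ) : ℂ) by push_cast; ring]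
    exact Complex.ofReal_im _
  have hfilter := Finset.sum_filter_of_ne (s := Finset.range (k+1)) (p := fun j => j % 2 = 0)
    (f := fun j => ((t:ℂ) ^ j * Complex.I ^ (k - j) * (k.choose j : ℂ)).im)
    (by intro j _ h0; by_contra hc; exact h0 (him j (by omega)))
  rw [← hfilter, QR, eval_finset_sum]
  refine Finset.sum_nbij' (i := fun h => k - 1 - 2*h) (j := fun j => (k - 1 - j)/2)
    ?_ ?_ ?_ ?_ ?_
  · intro h hh
    simp only [Finset.mem_range] at hh
    simp only [Finset.mem_filter, Finset.mem_range]
    omega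
  · intro j hj
    simp only [Finset.mem_filter, Finset.mem_range] at hj
    simp only [Finset.mem_range]
    omega
  · intro h hh
    simp only [Finset.mem_range] at hh
    omega
  · intro j hj
    simp only [Finset.mem_filter, Finset.mem_range] at hj
    omega
  · intro h hh
    simp only [Finset.mem_range] at hh
    have h1 : k - (k - 1 - 2*h) = 2*h + 1 := by omega
    rw [h1]
    have h2 : Complex.I ^ (2*h+1) = ((-1:ℝ)^h : ℂ) * Complex.I := by
      rw [pow_succ, pow_mul, Complex.I_sq]; push_cast; ring
    rw [h2, show k - 1 - 2*h = k - (2*h+1) by omega, Nat.choose_symm (by omega : 2*h+1 ≤ k)]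
    simp only [eval_mul, eval_C, eval_pow, eval_X]
    rw [show ((t:ℂ))^(k-(2*h+1)) * (((-1:ℝ)^h : ℂ) * Complex.I) * ((k.choose (2*h+1) : ℕ) : ℂ)
      = (((t^(k-(2*h+1)) * (-1:ℝ)^h * (k.choose (2*h+1) : ℕ)) : ℝ) : ℂ) * Complex.I by
        push_cast; ring]
    rw [Complex.mul_I_im, Complex.ofReal_re]
    ring


open Real in
lemma QR_root (k m : ℕ) (hk : Odd k) (x : ℝ) (hx0 : 0 < x) (hxpi : x < π)
    (hkx : (k:ℝ) * x = m * π) :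
    (QR k).eval (Real.tan (π/2 - x)) = 0 := by
  have hs : 0 < Real.sin x := Real.sin_pos_of_pos_of_lt_pi hx0 hxpi
  have htan : Real.tan (π/2 - x) = Real.cos x / Real.sin x := by
    rw [Real.tan_eq_sin_div_cos, Real.sin_pi_div_two_sub, Real.cos_pi_div_two_sub]
  rw [QR_eval k hk]
  have hsne : ((Real.sin x : ℂ)) ≠ 0 := Complex.ofReal_ne_zero.mpr hs.ne'
  have hkey : ((Real.tan (π/2 - x) : ℂ) + Complex.I)
      = (Complex.cos x + Complex.sin x * Complex.I) * ((Real.sin x : ℂ))⁻¹ := by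
    have hsne' : Complex.sin x ≠ 0 := by rw [← Complex.ofReal_sin]; exact hsne
    rw [htan, Complex.ofReal_div, Complex.ofReal_cos, Complex.ofReal_sin]
    field_simp
  rw [hkey, mul_pow, Complex.cos_add_sin_mul_I_pow]
  have hkx' : (k:ℂ) * (x:ℂ) = (((m:ℝ) * π : ℝ) : ℂ) := by
    push_cast
    exact_mod_cast congrArg (Complex.ofReal) hkx
  rw [hkx',
    show Complex.sin (((m:ℝ) * π : ℝ) : ℂ) = 0 by
      rw [← Complex.ofReal_sin, Real.sin_nat_mul_pi]; exact Complex.ofReal_zero,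
    show Complex.cos (((m:ℝ) * π : ℝ) : ℂ) = ((Real.cos ((m:ℝ)*π) : ℝ) : ℂ) by
      rw [← Complex.ofReal_cos],
    ← Complex.ofReal_inv, ← Complex.ofReal_pow, zero_mul, add_zero,
    ← Complex.ofReal_mul, Complex.ofReal_im]

lemma QR_basic (k : ℕ) (hk : Odd k) : QR k ≠ 0 ∧ (QR k).natDegree = k - 1 := by
  obtain ⟨n, hn⟩ := hk
  have hcoeff : (QR k).coeff (k-1) = k := by
    rw [QR, finset_sum_coeff, Finset.sum_eq_single 0]
    · simp [Nat.choose_one_right]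
    · intro h hh hne
      simp only [Finset.mem_range] at hh
      rw [coeff_C_mul, coeff_X_pow, if_neg (by omega : ¬ (k - 1 = k - 1 - 2*h))]
      ring
    · intro habs
      exact absurd (Finset.mem_range.mpr (by omega)) habs
  have hkR : ((k:ℝ)) ≠ 0 := Nat.cast_ne_zero.mpr (by omega)
  have hne : QR k ≠ 0 := by
    intro h0
    rw [h0, coeff_zero] at hcoeff
    exact hkR hcoeff.symm
  refine ⟨hne, le_antisymm ?_ ?_⟩
  · apply Polynomial.natDegree_sum_le_of_forall_le
    intro h hh
    simp only [Finset.mem_range] at hh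
    refine le_trans (Polynomial.natDegree_C_mul_le _ _) ?_
    rw [natDegree_X_pow]
    omega
  · exact Polynomial.le_natDegree_of_ne_zero (by rw [hcoeff]; exact hkR)

open Real

theorem QR_odd_even_function_and_root_count (k : ℕ) (hk : Odd k) (hk1 : 1 ≤ k) :
    (∃ R : Polynomial ℝ, QR k = R.comp (Polynomial.X ^ 2)) ∧
      ((QR k).roots.filter (fun x => 0 < x)).card = (k - 1) / 2 ∧
      ((QR k).roots.filter (fun x => x < 0)).card = (k - 1) / 2 := by
  obtain ⟨hne, hdeg⟩ := QR_basic k hk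
  obtain ⟨n, hn⟩ := hk
  have hkpos : (0:ℝ) < k := by positivity
  -- Part 1 : even function
  have part1 : ∃ R : Polynomial ℝ, QR k = R.comp (Polynomial.X ^ 2) := by
    refine ⟨∑ h ∈ Finset.range (k / 2 + 1),
      Polynomial.C ((-1 : ℝ) ^ h * (k.choose (2 * h + 1) : ℝ)) * Polynomial.X ^ (k/2 - h), ?_⟩
    rw [QR, Polynomial.comp, Polynomial.eval₂_finset_sum]
    refine Finset.sum_congr rfl (fun h hh => ?_)
    simp only [Finset.mem_range] at hh
    rw [Polynomial.eval₂_mul, Polynomial.eval₂_C, Polynomial.eval₂_X_pow, ← pow_mul]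
    congr 1
    congr 1
    omega
  -- roots
  set T : ℕ → ℝ := fun m => Real.tan (π/2 - m*π/k) with hT
  have hroot : ∀ m, 1 ≤ m → m ≤ k-1 → T m ∈ (QR k).roots := by
    intro m hm1 hm2
    rw [Polynomial.mem_roots hne]
    refine QR_root k m ⟨n, hn⟩ (m*π/k) ?_ ?_ ?_
    · positivity
    · rw [div_lt_iff₀ hkpos]
      have : (m:ℝ) < k := by exact_mod_cast (by omega : m < k)
      nlinarith [Real.pi_pos]
    · field_simp
  have hmem : ∀ m, 1 ≤ m → m ≤ k-1 → π/2 - m*π/k ∈ Set.Ioo (-(π/2)) (π/2) := by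
    intro m hm1 hm2
    constructor
    · have h1 : (m:ℝ)*π/k < π := by
        rw [div_lt_iff₀ hkpos]
        have : (m:ℝ) < k := by exact_mod_cast (by omega : m < k)
        nlinarith [Real.pi_pos]
      linarith
    · have h1 : (0:ℝ) < (m:ℝ)*π/k := by
        have : (0:ℝ) < (m:ℝ) := by exact_mod_cast (by omega : 0 < m)
        positivity
      linarith
  have hinj : ∀ m1 ∈ Finset.Icc 1 (k-1), ∀ m2 ∈ Finset.Icc 1 (k-1), T m1 = T m2 → m1 = m2 := by
    intro m1 h1 m2 h2 heq
    simp only [Finset.mem_Icc] at h1 h2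
    have := Real.injOn_tan (hmem m1 h1.1 h1.2) (hmem m2 h2.1 h2.2) heq
    have h3 : (m1:ℝ)*π/k = (m2:ℝ)*π/k := by linarith
    field_simp at h3
    exact_mod_cast h3
  have hpos : ∀ m, 1 ≤ m → m ≤ n → 0 < T m := by
    intro m hm1 hm2
    apply Real.tan_pos_of_pos_of_lt_pi_div_two
    · have : (m:ℝ)*π/k < π/2 := by
        rw [div_lt_iff₀ hkpos]
        have : 2*(m:ℝ) < k := by exact_mod_cast (by omega : 2*m < k)
        nlinarith [Real.pi_pos]
      linarith
    · have h1 : (0:ℝ) < (m:ℝ)*π/k := by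
        have : (0:ℝ) < (m:ℝ) := by exact_mod_cast (by omega : 0 < m)
        positivity
      linarith
  have hneg : ∀ m, n+1 ≤ m → m ≤ k-1 → T m < 0 := by
    intro m hm1 hm2
    apply Real.tan_neg_of_neg_of_pi_div_two_lt
    · have : π/2 < (m:ℝ)*π/k := by
        rw [lt_div_iff₀ hkpos]
        have : (k:ℝ) < 2*(m:ℝ) := by exact_mod_cast (by omega : k < 2*m)
        nlinarith [Real.pi_pos]
      linarith
    · exact (hmem m (by omega) hm2).1
  -- cardinality bounds
  have hcard : ∀ (a b : ℕ) (p : ℝ → Prop) [DecidablePred p], 1 ≤ a → b ≤ k - 1 →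
      (∀ m, a ≤ m → m ≤ b → p (T m)) →
      b + 1 - a ≤ Multiset.card ((QR k).roots.filter p) := by
    intro a b p _ ha hb hp
    have hsub : (Finset.Icc a b).image T ⊆ ((QR k).roots.filter p).toFinset := by
      intro y hy
      simp only [Finset.mem_image, Finset.mem_Icc] at hy
      obtain ⟨m, ⟨hm1, hm2⟩, rfl⟩ := hy
      rw [Multiset.mem_toFinset, Multiset.mem_filter]
      exact ⟨hroot m (by omega) (by omega), hp m hm1 hm2⟩
    calc b + 1 - a = (Finset.Icc a b).card := (Nat.card_Icc a b).symm
      _ = ((Finset.Icc a b).image T).card := by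
          rw [Finset.card_image_of_injOn]
          intro m1 h1 m2 h2 heq
          simp only [Finset.coe_Icc, Set.mem_Icc] at h1 h2
          exact hinj m1 (Finset.mem_Icc.mpr ⟨by omega, by omega⟩)
            m2 (Finset.mem_Icc.mpr ⟨by omega, by omega⟩) heq
      _ ≤ ((QR k).roots.filter p).toFinset.card := Finset.card_le_card hsub
      _ ≤ Multiset.card ((QR k).roots.filter p) := Multiset.toFinset_card_le _
  have hposcard : n ≤ Multiset.card ((QR k).roots.filter (fun x => 0 < x)) := by
    have := hcard 1 n (fun x => 0 < x) (le_refl 1) (by omega) (fun m hm1 hm2 => hpos m hm1 hm2)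
    omega
  have hnegcard : n ≤ Multiset.card ((QR k).roots.filter (fun x => x < 0)) := by
    have := hcard (n+1) (k-1) (fun x => x < 0) (by omega) (le_refl _)
      (fun m hm1 hm2 => hneg m hm1 hm2)
    omega
  have htot : Multiset.card ((QR k).roots.filter (fun x => 0 < x)) +
      Multiset.card ((QR k).roots.filter (fun x => x < 0)) ≤ k - 1 := by
    have h1 : ((QR k).roots.filter (fun x => x < 0)) ≤
        ((QR k).roots.filter (fun x => ¬ 0 < x)) :=
      Multiset.monotone_filter_right _ (fun x hx => not_lt.mpr (le_of_lt hx))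
    have h2 : Multiset.card ((QR k).roots.filter (fun x => 0 < x)) +
        Multiset.card ((QR k).roots.filter (fun x => ¬ 0 < x)) =
        Multiset.card ((QR k).roots) := by
      rw [← Multiset.card_add, Multiset.filter_add_not]
    have h3 := Polynomial.card_roots' (QR k)
    have h4 := Multiset.card_le_card h1
    omega
  refine ⟨part1, ?_, ?_⟩ <;> omega
end

section
/- Fix v = (v_0, v_1) ∈ ℂ² with v_1 ≠ 0 and v_0² + v_1² ≠ 0, and let k ≥ 1. Then the polynomial system p_0^k(u_0, u_1²) = v_0, u_1 · p_1^{k-1}(u_0, u_1²) = v_1 has exactly k² solutions (u_0, u_1) ∈ ℂ² (all with u_1 ≠ 0 and p_1^{k-1}(u_0,u_1²) ≠ 0), where p_0^k, p_1^{k-1} are determined by (x+iy)^k = p_0^k(x,y²) + i y p_1^{k-1}(x,y²). Equivalently, the map (u_0,u_1) ↦ (Re and Im-type components of (u_0 + √(-1) u_1)^k) is exactly k²-to-1 over such v. -/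
/-- `p0 k x s = ∑_h (-1)^h C(k,2h) x^(k-2h) s^h`, determined by
`(x + i y)^k = p0 k x (y²) + i y * p1 k x (y²)`. -/
noncomputable def p0 (k : ℕ) (x s : ℂ) : ℂ :=
  ∑ h ∈ Finset.range (k / 2 + 1),
    (-1 : ℂ) ^ h * (k.choose (2 * h) : ℂ) * x ^ (k - 2 * h) * s ^ h

/-- `p1 k x s = ∑_h (-1)^h C(k,2h+1) x^(k-1-2h) s^h`, determined by
`(x + i y)^k = p0 k x (y²) + i y * p1 k x (y²)`. -/
noncomputable def p1 (k : ℕ) (x s : ℂ) : ℂ :=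
  ∑ h ∈ Finset.range ((k + 1) / 2),
    (-1 : ℂ) ^ h * (k.choose (2 * h + 1) : ℂ) * x ^ (k - 1 - 2 * h) * s ^ h

lemma sum_even_odd (n : ℕ) (f : ℕ → ℂ) :
    ∑ j ∈ Finset.range n, f j =
      (∑ h ∈ Finset.range ((n + 1) / 2), f (2 * h)) +
        ∑ h ∈ Finset.range (n / 2), f (2 * h + 1) := by
  induction n with
  | zero => simp
  | succ n ih =>
    rcases Nat.even_or_odd n with ⟨m, hm⟩ | ⟨m, hm⟩
    · have h1 : (n + 1 + 1) / 2 = m + 1 := by omega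
      have h2 : (n + 1) / 2 = m := by omega
      have h3 : n / 2 = m := by omega
      rw [Finset.sum_range_succ, ih, h2, h3, h1, Finset.sum_range_succ]
      have hn : n = 2 * m := by omega
      rw [hn]; ring
    · have h1 : (n + 1 + 1) / 2 = m + 1 := by omega
      have h2 : (n + 1) / 2 = m + 1 := by omega
      have h3 : n / 2 = m := by omega
      rw [Finset.sum_range_succ, ih, h2, h3, h1, Finset.sum_range_succ]
      have hn : n = 2 * m + 1 := by omega
      rw [hn, Finset.sum_range_succ]; ring

lemma key (k : ℕ) (x y : ℂ) :
    (x + Complex.I * y) ^ k = p0 k x (y ^ 2) + Complex.I * y * p1 k x (y ^ 2) := by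
  rw [add_comm x (Complex.I * y), add_pow, sum_even_odd]
  have hr : (k + 1 + 1) / 2 = k / 2 + 1 := by omega
  rw [hr]
  congr 1
  · unfold p0
    apply Finset.sum_congr rfl
    intro h _
    rw [mul_pow, pow_mul, pow_mul, Complex.I_sq]
    ring
  · unfold p1
    rw [Finset.mul_sum]
    apply Finset.sum_congr rfl
    intro h _
    have hs : k - (2 * h + 1) = k - 1 - 2 * h := by omega
    rw [hs, pow_succ, mul_pow, pow_mul, pow_mul, Complex.I_sq]
    ring

lemma key' (k : ℕ) (x y : ℂ) :
    (x - Complex.I * y) ^ k = p0 k x (y ^ 2) - Complex.I * y * p1 k x (y ^ 2) := by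
  have := key k x (-y)
  rw [neg_pow, show (-1 : ℂ)^2 = 1 by norm_num, one_mul] at this
  rw [show x - Complex.I * y = x + Complex.I * (-y) from by ring, this]; ring

lemma card_pow_eq {k : ℕ} (hk : 1 ≤ k) {c : ℂ} (hc : c ≠ 0) :
    {z : ℂ | z ^ k = c}.ncard = k := by
  classical
  have hk0 : 0 < k := hk
  have hsep : (Polynomial.X ^ k - Polynomial.C c : Polynomial ℂ).Separable :=
    Polynomial.separable_X_pow_sub_C c (by exact_mod_cast Nat.cast_ne_zero.mpr hk0.ne') hc
  have hnodup : (Polynomial.nthRoots k c).Nodup := Polynomial.nodup_roots hsep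
  have hset : {z : ℂ | z ^ k = c} = ↑(Polynomial.nthRoots k c).toFinset := by
    ext z
    simp [Polynomial.mem_nthRoots hk0]
  rw [hset, Set.ncard_coe_finset, Multiset.toFinset_card_of_nodup hnodup,
    (Complex.isPrimitiveRoot_exp k hk0.ne').card_nthRoots,
    if_pos (IsAlgClosed.exists_pow_nat_eq c hk0)]

/-- The `k`-th power map is exactly `k²`-to-`1` over points `v = (v₀, v₁)` with `v₁ ≠ 0` and
`v₀² + v₁² ≠ 0`: the system `p0(u₀,u₁²) = v₀`, `u₁ p1(u₀,u₁²) = v₁` has exactly `k²` solutions,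
all of which satisfy `u₁ ≠ 0` and `p1(u₀,u₁²) ≠ 0`. -/
theorem power_map_k_squared_to_one (k : ℕ) (hk : 1 ≤ k) (v₀ v₁ : ℂ)
    (hv₁ : v₁ ≠ 0) (hv : v₀ ^ 2 + v₁ ^ 2 ≠ 0) :
    {u : ℂ × ℂ | p0 k u.1 (u.2 ^ 2) = v₀ ∧ u.2 * p1 k u.1 (u.2 ^ 2) = v₁}.ncard = k ^ 2 ∧
      ∀ u ∈ {u : ℂ × ℂ | p0 k u.1 (u.2 ^ 2) = v₀ ∧ u.2 * p1 k u.1 (u.2 ^ 2) = v₁},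
        u.2 ≠ 0 ∧ p1 k u.1 (u.2 ^ 2) ≠ 0 := by
  constructor
  · set w := v₀ + Complex.I * v₁ with hw_def
    set w' := v₀ - Complex.I * v₁ with hw'_def
    have hprod : w * w' = v₀ ^ 2 + v₁ ^ 2 := by
      rw [hw_def, hw'_def]
      linear_combination (-(v₁ ^ 2)) * Complex.I_sq
    have hw : w ≠ 0 := fun h => hv (by rw [← hprod, h, zero_mul])
    have hw' : w' ≠ 0 := fun h => hv (by rw [← hprod, h, mul_zero])
    set f : ℂ × ℂ → ℂ × ℂ := fun u => (u.1 + Complex.I * u.2, u.1 - Complex.I * u.2) with hf_def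
    have hfinj : Function.Injective f := by
      intro a b hab
      simp only [hf_def, Prod.mk.injEq] at hab
      obtain ⟨h1, h2⟩ := hab
      have hI : (Complex.I : ℂ) ≠ 0 := Complex.I_ne_zero
      have ha1 : a.1 = b.1 := by linear_combination (h1 + h2) / 2
      have ha2 : a.2 = b.2 := by
        have : Complex.I * a.2 = Complex.I * b.2 := by linear_combination (h1 - h2) / 2
        exact mul_left_cancel₀ hI this
      exact Prod.ext ha1 ha2
    have hfsurj : Function.Surjective f := by
      intro b
      refine ⟨((b.1 + b.2) / 2, (b.1 - b.2) / (2 * Complex.I)), ?_⟩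
      have hI : (Complex.I : ℂ) ≠ 0 := Complex.I_ne_zero
      simp only [hf_def]
      rw [Prod.ext_iff]
      constructor <;> · simp only []; field_simp; ring
    have hseteq : {u : ℂ × ℂ | p0 k u.1 (u.2 ^ 2) = v₀ ∧ u.2 * p1 k u.1 (u.2 ^ 2) = v₁} =
        f ⁻¹' ({a : ℂ | a ^ k = w} ×ˢ {b : ℂ | b ^ k = w'}) := by
      ext u
      simp only [Set.mem_setOf_eq, Set.mem_preimage, Set.mem_prod, hf_def]
      rw [key k u.1 u.2, key' k u.1 u.2]
      constructor
      · rintro ⟨h1, h2⟩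
        constructor
        · rw [hw_def]; linear_combination h1 + Complex.I * h2
        · rw [hw'_def]; linear_combination h1 - Complex.I * h2
      · rintro ⟨h1, h2⟩
        rw [hw_def] at h1; rw [hw'_def] at h2
        constructor
        · linear_combination (h1 + h2) / 2
        · have : Complex.I * (u.2 * p1 k u.1 (u.2 ^ 2)) = Complex.I * v₁ := by
            linear_combination (h1 - h2) / 2
          exact mul_left_cancel₀ Complex.I_ne_zero this
    rw [hseteq, Set.ncard_preimage_of_injective_subset_range hfinj
      (by rw [Set.range_eq_univ.mpr hfsurj]; exact Set.subset_univ _)]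
    have : ({a : ℂ | a ^ k = w} ×ˢ {b : ℂ | b ^ k = w'}).ncard =
        {a : ℂ | a ^ k = w}.ncard * {b : ℂ | b ^ k = w'}.ncard := by
      rw [← Nat.card_coe_set_eq, ← Nat.card_coe_set_eq, ← Nat.card_coe_set_eq,
        Nat.card_congr (Equiv.Set.prod _ _), Nat.card_prod]
    rw [this, card_pow_eq hk hw, card_pow_eq hk hw', sq]
  · rintro u ⟨-, h2⟩
    have hu2 : u.2 ≠ 0 := fun h => hv₁ (by rw [← h2, h, zero_mul])
    exact ⟨hu2, fun h => hv₁ (by rw [← h2, h, mul_zero])⟩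
end
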